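/- If a homogeneous degree-d element of Z⟨a,b⟩ lies in the image of the algebra map sending c ↦ a+b and d ↦ ab+ba, then its cd-preimage is unique; i.e., the map Z⟨c,d⟩ → Z⟨a,b⟩ given by c ↦ a+b, d ↦ ab+ba is injective. -/

import Mathlib

open FreeAlgebra

/-- The generator `a` of `ℤ⟨a,b⟩`. -/
noncomputable def genA : FreeAlgebra ℤ Bool := FreeAlgebra.ι ℤ false

/-- The generator `b` of `ℤ⟨a,b⟩`. -/
noncomputable def genB : FreeAlgebra ℤ Bool := FreeAlgebra.ι ℤ true

/-- The algebra map `ℤ⟨c,d⟩ → ℤ⟨a,b⟩` sending `c ↦ a + b` and `d ↦ ab + ba`.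
The domain is the free algebra on two generators, with `false` playing the role of `c`
and `true` playing the role of `d`. -/
noncomputable def cdToAb : FreeAlgebra ℤ Bool →ₐ[ℤ] FreeAlgebra ℤ Bool :=
  FreeAlgebra.lift ℤ (fun x : Bool => if x then genA * genB + genB * genA else genA + genB)

namespace CdAb

/-! ### Combinatorics of words -/

/-- Leading code of a letter: `c ↦ b`, `d ↦ ba`. -/
def code (b : Bool) : List Bool := if b then [true, false] else [true]
/-- Secondary code: `c ↦ a`, `d ↦ ab`. -/
def scode (b : Bool) : List Bool := if b then [false, true] else [false]
/-- Leading word of the image of a monomial. -/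
def enc (w : List Bool) : List Bool := w.flatMap code

/-- Binary value with a given accumulator. -/
def nuAux (n : ℕ) (l : List Bool) : ℕ := l.foldl (fun n b => 2 * n + cond b 1 0) n
/-- Binary value of a word with a leading 1; realizes the length-lex order inside `ℕ`. -/
def nu (l : List Bool) : ℕ := nuAux 1 l

lemma nuAux_append (n : ℕ) (x y : List Bool) :
    nuAux n (x ++ y) = nuAux (nuAux n x) y := List.foldl_append ..

lemma nuAux_linear (y : List Bool) : ∀ n, nuAux n y = n * 2 ^ y.length + nuAux 0 y := by
  induction y with
  | nil => intro n; simp [nuAux]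
  | cons b y ih =>
    intro n
    show nuAux (2 * n + cond b 1 0) y = n * 2 ^ (y.length + 1) + nuAux (2 * 0 + cond b 1 0) y
    rw [ih, ih (2 * 0 + cond b 1 0)]
    ring

lemma nuAux_zero_lt (y : List Bool) : nuAux 0 y < 2 ^ y.length := by
  induction y with
  | nil => simp [nuAux]
  | cons b y ih =>
    show nuAux (2 * 0 + cond b 1 0) y < 2 ^ (y.length + 1)
    rw [nuAux_linear]
    have : cond b 1 0 ≤ 1 := by cases b <;> simp
    have h2 : (2:ℕ) ^ (y.length + 1) = 2 ^ y.length + 2 ^ y.length := by ring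
    have := Nat.pow_pos (n := y.length) (by norm_num : 0 < 2)
    nlinarith

lemma nu_eq (y : List Bool) : nu y = 2 ^ y.length + nuAux 0 y := by
  rw [nu, nuAux_linear]; ring

lemma nu_append (x y : List Bool) : nu (x ++ y) = nu x * 2 ^ y.length + nuAux 0 y := by
  rw [nu, nuAux_append, nuAux_linear]; rfl

lemma nu_pos (y : List Bool) : 1 ≤ nu y := by
  rw [nu_eq]; have := Nat.pow_pos (n := y.length) (by norm_num : 0 < 2); omega

lemma length_le_of_nu_lt {u v : List Bool} (h : nu u < nu v) : u.length ≤ v.length := by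
  by_contra hc
  push_neg at hc
  have h1 : 2 ^ v.length + 2 ^ v.length ≤ 2 ^ u.length := by
    calc 2 ^ v.length + 2 ^ v.length = 2 ^ (v.length + 1) := by ring
    _ ≤ 2 ^ u.length := Nat.pow_le_pow_right (by norm_num) hc
  have h2 := nuAux_zero_lt v
  have h3 : 2 ^ u.length ≤ nu u := by rw [nu_eq]; omega
  rw [nu_eq v] at h
  omega

/-- Key monotonicity: prefixes of equal length, strict comparison in tails. -/
lemma nu_append_lt {p q u v : List Bool} (hl : p.length = q.length)
    (hpq : nu p ≤ nu q) (huv : nu u < nu v) : nu (p ++ u) < nu (q ++ v) := by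
  clear hl
  have hlen := length_le_of_nu_lt huv
  rw [nu_append, nu_append]
  have h1 : nuAux 0 u + 2 ^ u.length = nu u := by rw [nu_eq]; omega
  have h2 : nuAux 0 v + 2 ^ v.length = nu v := by rw [nu_eq]; omega
  have hq1 : 1 ≤ nu q := nu_pos q
  have hp1 : 1 ≤ nu p := nu_pos p
  have hpow : 2 ^ u.length ≤ 2 ^ v.length := Nat.pow_le_pow_right (by norm_num) hlen
  calc nu p * 2 ^ u.length + nuAux 0 u
      = (nu p - 1) * 2 ^ u.length + (2 ^ u.length + nuAux 0 u) := by
        rw [Nat.sub_mul]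
        have := Nat.le_mul_of_pos_left (2 ^ u.length) hp1
        omega
    _ ≤ (nu q - 1) * 2 ^ v.length + nu u := by
        have := Nat.mul_le_mul (Nat.sub_le_sub_right hpq 1) hpow
        omega
    _ < (nu q - 1) * 2 ^ v.length + nu v := by omega
    _ = nu q * 2 ^ v.length + nuAux 0 v := by
        rw [Nat.sub_mul]
        have : 2 ^ v.length ≤ nu q * 2 ^ v.length := Nat.le_mul_of_pos_left _ hq1
        omega

/-- Strict comparison of equal-length prefixes, same tail. -/
lemma nu_append_lt' {p q : List Bool} (v : List Bool) (hl : p.length = q.length)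
    (hpq : nu p < nu q) : nu (p ++ v) < nu (q ++ v) := by
  clear hl
  rw [nu_append, nu_append]
  have : nu p * 2 ^ v.length < nu q * 2 ^ v.length :=
    Nat.mul_lt_mul_of_lt_of_le hpq le_rfl (Nat.pow_pos (by norm_num))
  omega

lemma nu_scode_lt_code (b : Bool) : nu (scode b) < nu (code b) := by
  cases b <;> decide

lemma length_scode (b : Bool) : (scode b).length = (code b).length := by
  cases b <;> rfl

lemma enc_cons (b : Bool) (w : List Bool) : enc (b :: w) = code b ++ enc w := rfl

lemma enc_eq_nil {w : List Bool} (h : enc w = []) : w = [] := by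
  cases w with
  | nil => rfl
  | cons b w => cases b <;> simp [enc, code] at h

lemma enc_head : ∀ w : List Bool, w = [] ∨ ∃ t, enc w = true :: t := by
  intro w
  cases w with
  | nil => left; rfl
  | cons b w => right; cases b <;> exact ⟨_, rfl⟩

lemma enc_injective : Function.Injective enc := by
  intro w1
  induction w1 with
  | nil => intro w2 h; exact (enc_eq_nil (w := w2) h.symm).symm
  | cons b1 w1 ih =>
    intro w2 h
    cases w2 with
    | nil => exact absurd (enc_eq_nil h) (by simp)
    | cons b2 w2 =>
      rw [enc_cons, enc_cons] at h
      cases b1 <;> cases b2 <;> simp [code] at h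
      · rw [ih h]
      · rcases enc_head w1 with h1 | ⟨t, ht⟩
        · subst h1; simp [enc] at h
        · rw [ht] at h; simp at h
      · rcases enc_head w2 with h1 | ⟨t, ht⟩
        · subst h1; simp [enc] at h
        · rw [ht] at h; simp at h
      · rw [ih h]

/-! ### The monoid algebra picture -/

abbrev A := MonoidAlgebra ℤ (FreeMonoid Bool)

noncomputable def E : FreeAlgebra ℤ Bool ≃ₐ[ℤ] A :=
  FreeAlgebra.equivMonoidAlgebraFreeMonoid

noncomputable def Psi : A →ₐ[ℤ] A :=
  (E.toAlgHom.comp cdToAb).comp E.symm.toAlgHom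

/-- Monomial with coefficient 1 attached to a word. -/
noncomputable def W (l : List Bool) : A := MonoidAlgebra.single (FreeMonoid.ofList l) 1

lemma W_mul (l₁ l₂ : List Bool) : W l₁ * W l₂ = W (l₁ ++ l₂) := by
  rw [W, W, W, MonoidAlgebra.single_mul_single, one_mul]
  rfl

lemma E_iota (b : Bool) : E (FreeAlgebra.ι ℤ b) = W [b] := by
  simp [E, FreeAlgebra.equivMonoidAlgebraFreeMonoid, W, MonoidAlgebra.of_apply]

lemma Psi_single (b : Bool) : Psi (W [b]) = W (code b) + W (scode b) := by
  have h : E.symm (W [b]) = FreeAlgebra.ι ℤ b := by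
    rw [← E_iota, AlgEquiv.symm_apply_apply]
  rw [Psi]
  simp only [AlgHom.comp_apply, AlgEquiv.coe_algHom, h]
  show E (cdToAb (FreeAlgebra.ι ℤ b)) = _
  rw [cdToAb, FreeAlgebra.lift_ι_apply]
  cases b
  · simp only [code, scode, Bool.false_eq_true, if_false, genA, genB, map_add, E_iota]
    rw [add_comm]
  · simp only [code, scode, if_true, genA, genB, map_add, map_mul, E_iota, W_mul]
    norm_num [add_comm]

lemma W_apply_self (l : List Bool) : (W l).coeff (FreeMonoid.ofList l) = 1 := Finsupp.single_eq_same

lemma W_apply_ne {l : List Bool} {u : FreeMonoid Bool} (h : FreeMonoid.ofList l ≠ u) :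
    (W l).coeff u = 0 := Finsupp.single_eq_of_ne' h

/-- Structure lemma: the image of a monomial is its leading word plus strictly
smaller terms (in the `nu` order). -/
lemma Psi_W (w : List Bool) : ∃ r : A, Psi (W w) = W (enc w) + r ∧
    ∀ u : FreeMonoid Bool, r.coeff u ≠ 0 → nu (FreeMonoid.toList u) < nu (enc w) := by
  classical
  induction w with
  | nil =>
    refine ⟨0, ?_, by simp⟩
    have h1 : W [] = (1 : A) := rfl
    rw [show enc [] = [] from rfl, h1, map_one, add_zero]
  | cons b w ih =>
    obtain ⟨r, hr, hb⟩ := ih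
    refine ⟨W (scode b ++ enc w) + (W (code b) + W (scode b)) * r, ?_, ?_⟩
    · have h1 : W (b :: w) = W [b] * W w := (W_mul [b] w).symm
      rw [h1, map_mul, Psi_single, hr, enc_cons, ← W_mul, ← W_mul]
      noncomm_ring
    · intro u hu
      have : (W (scode b ++ enc w)).coeff u ≠ 0 ∨ ((W (code b) + W (scode b)) * r).coeff u ≠ 0 := by
        by_contra hc
        push_neg at hc
        exact hu (by rw [MonoidAlgebra.coeff_add, Finsupp.add_apply, hc.1, hc.2, add_zero])
      rcases this with h | h
      · have : FreeMonoid.ofList (scode b ++ enc w) = u := by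
          by_contra hc; exact h (W_apply_ne hc)
        rw [← this]
        rw [enc_cons]
        exact nu_append_lt' (enc w) (length_scode b) (nu_scode_lt_code b)
      · have hmem : u ∈ ((W (code b) + W (scode b)) * r).coeff.support := Finsupp.mem_support_iff.mpr h
        have hsub := MonoidAlgebra.support_coeff_mul_subset (W (code b) + W (scode b)) r
        have := hsub hmem
        rw [Finset.mem_mul] at this
        obtain ⟨p, hp, u', hu', rfl⟩ := this
        have hp' : p = FreeMonoid.ofList (code b) ∨ p = FreeMonoid.ofList (scode b) := by
          have := Finsupp.support_add hp
          rw [Finset.mem_union] at this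
          rcases this with h' | h' <;>
            [left; right] <;> exact Finset.mem_singleton.mp (Finsupp.support_single_subset h')
        have hu'' : nu (FreeMonoid.toList u') < nu (enc w) :=
          hb u' (Finsupp.mem_support_iff.mp hu')
        rw [enc_cons]
        have htl : FreeMonoid.toList (p * u') = FreeMonoid.toList p ++ FreeMonoid.toList u' :=
          rfl
        rw [htl]
        rcases hp' with rfl | rfl
        · exact nu_append_lt rfl le_rfl hu''
        · exact nu_append_lt (length_scode b) (le_of_lt (nu_scode_lt_code b)) hu''

lemma Psi_injective : Function.Injective ⇑Psi := by
  classical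
  rw [injective_iff_map_eq_zero]
  intro z hz
  by_contra hne
  choose r hEq hB using Psi_W
  obtain ⟨w0, hw0, hmax⟩ := Finset.exists_max_image z.coeff.support
    (fun w => nu (enc (FreeMonoid.toList w))) (Finsupp.support_nonempty_iff.mpr (by simpa using hne))
  set key : FreeMonoid Bool := FreeMonoid.ofList (enc (FreeMonoid.toList w0)) with hkey
  have hsingle : ∀ w : FreeMonoid Bool,
      MonoidAlgebra.single w (z.coeff w) = z.coeff w • W (FreeMonoid.toList w) := by
    intro w
    rw [W]
    rw [MonoidAlgebra.smul_single' (z.coeff w) _ 1, mul_one, FreeMonoid.ofList_toList]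
  have hzsum : z = ∑ w ∈ z.coeff.support, MonoidAlgebra.single w (z.coeff w) := by
    conv_lhs => rw [← MonoidAlgebra.sum_coeff_single z]
    rfl
  have hPsiz : (Psi z).coeff key = ∑ w ∈ z.coeff.support,
      z.coeff w * ((W (enc (FreeMonoid.toList w))).coeff key + (r (FreeMonoid.toList w)).coeff key) := by
    conv_lhs => rw [hzsum]
    rw [map_sum]
    rw [MonoidAlgebra.coeff_sum, Finsupp.finset_sum_apply]
    refine Finset.sum_congr rfl fun w _ => ?_
    rw [hsingle w, map_smul, hEq]
    rw [MonoidAlgebra.coeff_smul, Finsupp.smul_apply, MonoidAlgebra.coeff_add, Finsupp.add_apply, smul_eq_mul]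
  have hterm : ∀ w ∈ z.coeff.support, w ≠ w0 →
      z.coeff w * ((W (enc (FreeMonoid.toList w))).coeff key + (r (FreeMonoid.toList w)).coeff key) = 0 := by
    intro w hw hne'
    have h1 : (W (enc (FreeMonoid.toList w))).coeff key = 0 := by
      refine W_apply_ne ?_
      rw [hkey]
      intro hc
      apply hne'
      have := enc_injective ((FreeMonoid.ofList (α := Bool)).injective hc)
      exact (FreeMonoid.toList (α := Bool)).injective this
    have h2 : (r (FreeMonoid.toList w)).coeff key = 0 := by
      by_contra hc
      have := hB (FreeMonoid.toList w) key hc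
      have hk : FreeMonoid.toList key = enc (FreeMonoid.toList w0) := rfl
      rw [hk] at this
      have := lt_of_lt_of_le this (hmax w hw)
      exact lt_irrefl _ this
    rw [h1, h2]; ring
  have hmain : (Psi z).coeff key = z.coeff w0 := by
    rw [hPsiz, Finset.sum_eq_single w0 hterm (fun h => absurd hw0 h)]
    have h1 : (W (enc (FreeMonoid.toList w0))).coeff key = 1 := Finsupp.single_eq_same
    have h2 : (r (FreeMonoid.toList w0)).coeff key = 0 := by
      by_contra hc
      exact lt_irrefl _ (hB (FreeMonoid.toList w0) key hc)
    rw [h1, h2]; ring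
  rw [hz] at hmain
  exact (Finsupp.mem_support_iff.mp hw0) hmain.symm

end CdAb

/-- The map `ℤ⟨c,d⟩ → ℤ⟨a,b⟩`, `c ↦ a+b`, `d ↦ ab+ba`, is injective: cd-preimages
are unique when they exist. -/
theorem cdToAb_injective : Function.Injective ⇑cdToAb := by
  intro x y h
  have hx : ∀ t, CdAb.Psi (CdAb.E t) = CdAb.E (cdToAb t) := by
    intro t
    simp [CdAb.Psi]
  have : CdAb.Psi (CdAb.E x) = CdAb.Psi (CdAb.E y) := by rw [hx, hx, h]
  have := CdAb.Psi_injective this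
  exact CdAb.E.injective this
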